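/- The only rational points on the elliptic curve E: y² = x³ + x (i.e., y² = x(x² + 1)) are (0, 0) and the point at infinity. -/

import Mathlib

/-- If `n ^ 3` is a perfect square, then `n` is a perfect square. -/
lemma cube_eq_sq_aux (n m : ℕ) (hn : 0 < n) (h : n ^ 3 = m ^ 2) : ∃ k : ℕ, n = k ^ 2 := by
  set d := Nat.gcd n m with hd
  have hd0 : 0 < d := Nat.gcd_pos_of_pos_left m hn
  have hb' : d * (n / d) = n := Nat.mul_div_cancel' (Nat.gcd_dvd_left n m)
  have hc' : d * (m / d) = m := Nat.mul_div_cancel' (Nat.gcd_dvd_right n m)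
  set b := n / d with hb
  set c := m / d with hc
  have hcop : Nat.Coprime b c := Nat.coprime_div_gcd_div_gcd hd0
  have key : d * b ^ 3 = c ^ 2 := by
    have h2 : (d * b) ^ 3 = (d * c) ^ 2 := by rw [hb', hc']; exact h
    have h3 : d ^ 2 * (d * b ^ 3) = d ^ 2 * c ^ 2 := by ring_nf; ring_nf at h2; linarith
    exact Nat.eq_of_mul_eq_mul_left (by positivity) h3
  have hbdvd : b ∣ c ^ 2 := ⟨d * b ^ 2, by rw [← key]; ring⟩
  have hb1 : b = 1 := Nat.Coprime.eq_one_of_dvd (hcop.pow_right 2) hbdvd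
  have : n = c ^ 2 := by
    rw [← hb', hb1, mul_one]
    rw [hb1] at key; simp at key; omega
  exact ⟨c, this⟩

theorem E_x_cubed_plus_x_rational_points (x y : ℚ) :
    y ^ 2 = x ^ 3 + x → x = 0 ∧ y = 0 := by
  intro heq
  set a : ℤ := x.num with ha
  set b : ℤ := (x.den : ℤ) with hbdef
  have hb0 : 0 < b := by rw [hbdef]; exact_mod_cast x.pos
  have hcop : IsCoprime a b := by
    rw [Int.isCoprime_iff_gcd_eq_one]
    exact x.reduced
  -- key equation over the integers
  have hx : (x : ℚ) = (a : ℚ) / (b : ℚ) := (Rat.num_div_den x).symm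
  have hbQ : (b : ℚ) ≠ 0 := by exact_mod_cast hb0.ne'
  have key : (y ^ 2 : ℚ) = ((a * (a ^ 2 + b ^ 2) : ℤ) : ℚ) / ((b ^ 3 : ℤ) : ℚ) := by
    rw [heq, hx]
    push_cast
    field_simp
  have hcop2 : IsCoprime a (a ^ 2 + b ^ 2) := by
    have := (hcop.pow_right (n := 2)).add_mul_left_right a
    have h2 : b ^ 2 + a * a = a ^ 2 + b ^ 2 := by ring
    rwa [h2] at this
  have hcop3 : IsCoprime (a ^ 2 + b ^ 2) b := by
    have := (hcop.symm.pow_right (n := 2)).add_mul_left_right b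
    have h2 : a ^ 2 + b * b = a ^ 2 + b ^ 2 := by ring
    rw [h2] at this
    exact this.symm
  have hcop4 : IsCoprime (a * (a ^ 2 + b ^ 2)) (b ^ 3) :=
    (hcop.mul_left hcop3).pow_right
  have hb3 : (0 : ℤ) < b ^ 3 := by positivity
  have hcopN : Nat.Coprime (a * (a ^ 2 + b ^ 2)).natAbs (b ^ 3).natAbs :=
    Int.isCoprime_iff_gcd_eq_one.mp hcop4
  have hnum : a * (a ^ 2 + b ^ 2) = y.num ^ 2 := by
    have := Rat.num_div_eq_of_coprime hb3 hcopN
    rw [← key] at this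
    rw [← this, Rat.num_pow]
  have hden : b ^ 3 = (y.den : ℤ) ^ 2 := by
    have := Rat.den_div_eq_of_coprime hb3 hcopN
    rw [← key] at this
    rw [← this, Rat.den_pow]
    push_cast
    ring
  -- x.den is a perfect square
  obtain ⟨k, hk⟩ : ∃ k : ℕ, x.den = k ^ 2 := by
    apply cube_eq_sq_aux x.den y.den x.pos
    rw [hbdef] at hden
    exact_mod_cast hden
  have hk0 : k ≠ 0 := by
    intro h; rw [h] at hk; simp at hk
  -- a ≥ 0
  have hsumpos : (0 : ℤ) < a ^ 2 + b ^ 2 := by positivity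
  have ha0 : 0 ≤ a := by
    nlinarith [sq_nonneg y.num, hnum]
  -- a is a perfect square
  obtain ⟨m, hm⟩ := Int.sq_of_isCoprime hcop2 hnum
  have ham : a = m ^ 2 := by
    rcases hm with hm | hm
    · exact hm
    · have : m ^ 2 ≤ 0 := by rw [hm] at ha0; linarith
      have : m = 0 := by nlinarith [sq_nonneg m]
      simp [this] at hm ⊢; omega
  -- a² + b² is a perfect square
  obtain ⟨n, hn⟩ := Int.sq_of_isCoprime hcop2.symm (by rw [mul_comm] at hnum; exact hnum)
  have hansq : a ^ 2 + b ^ 2 = n ^ 2 := by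
    rcases hn with hn | hn
    · exact hn
    · nlinarith [sq_nonneg n]
  -- now m⁴ + k⁴ = n²
  have hbk : b = (k : ℤ) ^ 2 := by rw [hbdef, hk]; push_cast; ring
  have hfermat : m ^ 4 + (k : ℤ) ^ 4 = n ^ 2 := by
    rw [← hansq, ham, hbk]; ring
  have hm0 : m = 0 := by
    by_contra hm0
    exact not_fermat_42 hm0 (by exact_mod_cast hk0) hfermat
  have hx0 : x = 0 := by
    rw [← Rat.num_eq_zero, ← ha, ham, hm0]; ring
  refine ⟨hx0, ?_⟩
  rw [hx0] at heq
  simpa [pow_eq_zero_iff] using heq
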